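/- Let μ, p, H, a satisfy the Friedmann system for k = 0: 3H² = μ, μ̇ = −3H(μ + p), H = ȧ/a, with p = wμ, w < −1, μ > 0, H > 0 on [t₀, t_s), and suppose |p(t)| → ∞ as t → t_s⁻ with t_s < ∞. Then μ(t) → ∞, H(t) → ∞, and a(t) → ∞ as t → t_s⁻. Conversely, if a → ∞ and H → ∞ and μ → ∞ at finite t_s then |p| = |w|μ → ∞. -/

import Mathlib

open Real Filter Topology Set

private lemma constOnIco {F : ℝ → ℝ} {t₀ ts : ℝ}
    (h : ∀ x ∈ Ico t₀ ts, HasDerivAt F 0 x) :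
    ∀ x ∈ Ico t₀ ts, F x = F t₀ := by
  intro x hx
  have hsub : Icc t₀ x ⊆ Ico t₀ ts := fun y hy => ⟨hy.1, lt_of_le_of_lt hy.2 hx.2⟩
  have hcont : ContinuousOn F (Icc t₀ x) := fun y hy =>
    ((h y (hsub hy)).continuousAt).continuousWithinAt
  have hderiv : ∀ y ∈ Ico t₀ x, HasDerivWithinAt F 0 (Ici y) y := fun y hy =>
    (h y (hsub ⟨hy.1, hy.2.le⟩)).hasDerivWithinAt
  exact constant_of_has_deriv_right_zero hcont hderiv x (right_mem_Icc.2 hx.1)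

private lemma sqrtAtTop : Tendsto Real.sqrt atTop atTop := by
  apply tendsto_atTop_atTop_of_monotone (fun _ _ h => Real.sqrt_le_sqrt h)
  intro b
  exact ⟨b ^ 2, by simpa [Real.sqrt_sq_eq_abs] using le_abs_self b⟩

/-- Characterization of the `(S₂, N₃, B₁)` big rip for a phantom fluid
`p = wμ`, `w < −1`, satisfying the flat Friedmann system on `[t₀, t_s)`:
`|p| → ∞` as `t → t_s⁻` iff (indeed implies and is implied by)
`μ → ∞`, `H → ∞` and `a → ∞`. -/
theorem phantom_characterization
    (w t₀ ts : ℝ) (hw : w < -1) (hts : t₀ < ts)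
    (μ p H a : ℝ → ℝ)
    (hFried : ∀ t ∈ Ico t₀ ts, 3 * (H t) ^ 2 = μ t)
    (hcont : ∀ t ∈ Ico t₀ ts, HasDerivAt μ (-3 * H t * (μ t + p t)) t)
    (hscale : ∀ t ∈ Ico t₀ ts, HasDerivAt a (a t * H t) t)
    (heos : ∀ t ∈ Ico t₀ ts, p t = w * μ t)
    (hμpos : ∀ t ∈ Ico t₀ ts, 0 < μ t)
    (hHpos : ∀ t ∈ Ico t₀ ts, 0 < H t)
    (hapos : ∀ t ∈ Ico t₀ ts, 0 < a t) :
    (Tendsto (fun t => |p t|) (nhdsWithin ts (Iio ts)) atTop →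
      Tendsto μ (nhdsWithin ts (Iio ts)) atTop ∧
      Tendsto H (nhdsWithin ts (Iio ts)) atTop ∧
      Tendsto a (nhdsWithin ts (Iio ts)) atTop) ∧
    ((Tendsto a (nhdsWithin ts (Iio ts)) atTop ∧
      Tendsto H (nhdsWithin ts (Iio ts)) atTop ∧
      Tendsto μ (nhdsWithin ts (Iio ts)) atTop) →
      Tendsto (fun t => |p t|) (nhdsWithin ts (Iio ts)) atTop) := by
  have ht₀ : t₀ ∈ Ico t₀ ts := ⟨le_refl _, hts⟩
  have hIco : ∀ᶠ t in nhdsWithin ts (Iio ts), t ∈ Ico t₀ ts := by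
    filter_upwards [mem_nhdsWithin_of_mem_nhds (Ioi_mem_nhds hts),
      self_mem_nhdsWithin] with t h1 h2
    exact ⟨le_of_lt h1, h2⟩
  have hHsqrt : ∀ t ∈ Ico t₀ ts, H t = Real.sqrt (μ t / 3) := by
    intro t ht
    have h1 := hFried t ht
    have h2 := hHpos t ht
    have h3 : μ t / 3 = (H t) ^ 2 := by linarith
    rw [h3, Real.sqrt_sq h2.le]
  have habs : ∀ t ∈ Ico t₀ ts, |p t| = -w * μ t := by
    intro t ht
    rw [heos t ht, abs_mul, abs_of_pos (hμpos t ht), abs_of_neg (by linarith : w < 0)]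
  have hμH : Tendsto μ (nhdsWithin ts (Iio ts)) atTop →
      Tendsto H (nhdsWithin ts (Iio ts)) atTop := by
    intro hμ
    have h1 : Tendsto (fun t => μ t / 3) (nhdsWithin ts (Iio ts)) atTop :=
      hμ.atTop_div_const (by norm_num)
    have h2 : Tendsto (fun t => Real.sqrt (μ t / 3)) (nhdsWithin ts (Iio ts)) atTop :=
      sqrtAtTop.comp h1
    exact h2.congr' (by filter_upwards [hIco] with t ht; exact (hHsqrt t ht).symm)
  constructor
  · -- forward direction
    intro hp
    have hμ : Tendsto μ (nhdsWithin ts (Iio ts)) atTop := by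
      have h1 := hp.const_mul_atTop (show (0:ℝ) < (-w)⁻¹ by
        apply inv_pos.2; linarith)
      refine h1.congr' ?_
      filter_upwards [hIco] with t ht
      rw [habs t ht]
      have hwne : w ≠ 0 := by linarith
      field_simp
    have hH := hμH hμ
    refine ⟨hμ, hH, ?_⟩
    -- now the scale factor
    obtain ⟨c, hc, hceq⟩ : ∃ c : ℝ, 0 < c ∧ c = -(3 * (1 + w)) / 2 :=
      ⟨_, by linarith, rfl⟩
    -- 1/H is affine
    have hF : ∀ x ∈ Ico t₀ ts,
        HasDerivAt (fun t => (Real.sqrt (μ t / 3))⁻¹ + c * t) 0 x := by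
      intro x hx
      have hμ' := hcont x hx
      have hμx := hμpos x hx
      have hHx := hHpos x hx
      have hFr := hFried x hx
      have hpx := heos x hx
      have hsq : Real.sqrt (μ x / 3) = H x := (hHsqrt x hx).symm
      have hne : μ x / 3 ≠ 0 := by positivity
      have h1 : HasDerivAt (fun t => μ t / 3) ((-3 * H x * (μ x + p x)) / 3) x :=
        hμ'.div_const 3
      have h2 : HasDerivAt (fun t => Real.sqrt (μ t / 3))
          (1 / (2 * Real.sqrt (μ x / 3)) * ((-3 * H x * (μ x + p x)) / 3)) x :=
        (Real.hasDerivAt_sqrt hne).comp x h1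
      have hsne : Real.sqrt (μ x / 3) ≠ 0 := by rw [hsq]; exact ne_of_gt hHx
      have h3 := h2.inv hsne
      have h4 := h3.add ((hasDerivAt_id x).const_mul c)
      convert h4 using 1
      case e'_4 => rfl
      case e'_5 => rfl
      case e'_8 => rfl
      rw [hsq, hpx, hceq]
      have hμeq : μ x = 3 * H x ^ 2 := hFr.symm
      rw [hμeq]
      have hHne : H x ≠ 0 := ne_of_gt hHx
      field_simp
      ring
    have haff := constOnIco hF
    have hinv : ∀ x ∈ Ico t₀ ts, (H x)⁻¹ = (H t₀)⁻¹ + c * t₀ - c * x := by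
      intro x hx
      have := haff x hx
      rw [hHsqrt x hx, hHsqrt t₀ ht₀]
      linarith
    have h0 : Tendsto (fun t => (H t)⁻¹) (nhdsWithin ts (Iio ts)) (𝓝 0) :=
      hH.inv_tendsto_atTop
    have hA : Tendsto (fun t => (H t₀)⁻¹ + c * t₀ - c * t) (nhdsWithin ts (Iio ts))
        (𝓝 ((H t₀)⁻¹ + c * t₀ - c * ts)) := by
      apply Tendsto.mono_left _ nhdsWithin_le_nhds
      exact (continuous_const.sub (continuous_const.mul continuous_id)).tendsto ts
    have hzero : (0:ℝ) = (H t₀)⁻¹ + c * t₀ - c * ts := by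
      refine tendsto_nhds_unique ?_ hA
      refine h0.congr' ?_
      filter_upwards [hIco] with t ht
      exact hinv t ht
    have hkey : ∀ x ∈ Ico t₀ ts, H x = (c * (ts - x))⁻¹ := by
      intro x hx
      have h1 : (H x)⁻¹ = c * (ts - x) := by
        have := hinv x hx; ring_nf; ring_nf at this ⊢; linarith
      rw [← h1, inv_inv]
    -- log a
    have hG : ∀ x ∈ Ico t₀ ts,
        HasDerivAt (fun t => Real.log (a t) + c⁻¹ * Real.log (ts - t)) 0 x := by
      intro x hx
      have ha' := hscale x hx
      have hax := hapos x hx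
      have h1 : HasDerivAt (fun t => Real.log (a t)) ((a x)⁻¹ * (a x * H x)) x :=
        (Real.hasDerivAt_log (ne_of_gt hax)).comp x ha'
      have h2 : HasDerivAt (fun t => ts - t) (-1) x := by
        simpa using (hasDerivAt_id x).const_sub ts
      have hpos : (0:ℝ) < ts - x := by have := hx.2; linarith
      have h3 : HasDerivAt (fun t => Real.log (ts - t)) ((ts - x)⁻¹ * (-1)) x :=
        (Real.hasDerivAt_log (ne_of_gt hpos)).comp x h2
      have h4 := h1.add (h3.const_mul c⁻¹)
      convert h4 using 1
      case e'_4 => rfl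
      case e'_5 => rfl
      case e'_8 => rfl
      rw [hkey x hx]
      have hane : a x ≠ 0 := ne_of_gt hax
      have hcne : c ≠ 0 := ne_of_gt hc
      have htne : ts - x ≠ 0 := ne_of_gt hpos
      field_simp
      ring
    have hGaff := constOnIco hG
    have hloga : ∀ x ∈ Ico t₀ ts, Real.log (a x) =
        (Real.log (a t₀) + c⁻¹ * Real.log (ts - t₀)) - c⁻¹ * Real.log (ts - x) := by
      intro x hx
      have := hGaff x hx
      linarith
    have h5 : Tendsto (fun t => ts - t) (nhdsWithin ts (Iio ts)) (𝓝[>] 0) := by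
      apply tendsto_nhdsWithin_of_tendsto_nhds_of_eventually_within
      · have : Tendsto (fun t : ℝ => ts - t) (𝓝 ts) (𝓝 (ts - ts)) :=
          (continuous_const.sub continuous_id).tendsto ts
        simpa using this.mono_left nhdsWithin_le_nhds
      · filter_upwards [self_mem_nhdsWithin] with t ht
        exact sub_pos.2 (mem_Iio.1 ht)
    have h6 : Tendsto (fun t => Real.log (ts - t)) (nhdsWithin ts (Iio ts)) atBot :=
      Real.tendsto_log_nhdsGT_zero.comp h5
    have h7 : Tendsto (fun t => c⁻¹ * Real.log (ts - t)) (nhdsWithin ts (Iio ts)) atBot :=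
      h6.const_mul_atBot (inv_pos.2 hc)
    have h8 : Tendsto (fun t => -(c⁻¹ * Real.log (ts - t))) (nhdsWithin ts (Iio ts)) atTop :=
      tendsto_neg_atBot_atTop.comp h7
    have h9 : Tendsto (fun t => (Real.log (a t₀) + c⁻¹ * Real.log (ts - t₀)) -
        c⁻¹ * Real.log (ts - t)) (nhdsWithin ts (Iio ts)) atTop := by
      simpa [sub_eq_add_neg] using
        tendsto_atTop_add_const_left _ (Real.log (a t₀) + c⁻¹ * Real.log (ts - t₀)) h8
    have h10 : Tendsto (fun t => Real.log (a t)) (nhdsWithin ts (Iio ts)) atTop := by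
      refine h9.congr' ?_
      filter_upwards [hIco] with t ht
      exact (hloga t ht).symm
    have h11 : Tendsto (fun t => Real.exp (Real.log (a t))) (nhdsWithin ts (Iio ts)) atTop :=
      Real.tendsto_exp_atTop.comp h10
    refine h11.congr' ?_
    filter_upwards [hIco] with t ht
    exact Real.exp_log (hapos t ht)
  · -- converse
    rintro ⟨-, -, hμ⟩
    have h1 := hμ.const_mul_atTop (show (0:ℝ) < -w by linarith)
    exact h1.congr' (by filter_upwards [hIco] with t ht; exact (habs t ht).symm)
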